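/- arXiv:0908.0208 — 3 statements merged into one kernel-verified Lean document; each statement's English description precedes it below -/
import Mathlib

section
/- The map from [0, ∞] to the Chabauty space of closed subgroups of ℝ, sending α ∈ (0, ∞) to the subgroup (1/α)ℤ, sending 0 to {0}, and sending ∞ to ℝ, is a homeomorphism. -/
/-- The space of closed subgroups of a topological additive group `G`. -/
def ChabautyAddGrp (G : Type*) [AddGroup G] [TopologicalSpace G] :=
  {H : AddSubgroup G // IsClosed (H : Set G)}

/-- The Chabauty topology on the space of closed subgroups. -/
instance (G : Type*) [AddGroup G] [TopologicalSpace G] : TopologicalSpace (ChabautyAddGrp G) :=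
  TopologicalSpace.generateFrom
    ({S | ∃ K : Set G, IsCompact K ∧ S = {A : ChabautyAddGrp G | (A.1 : Set G) ∩ K = ∅}} ∪
     {S | ∃ U : Set G, IsOpen U ∧ S = {A : ChabautyAddGrp G | ((A.1 : Set G) ∩ U).Nonempty}})

open scoped ENNReal
open Set AddSubgroup

open Classical in
noncomputable def psi (A : ChabautyAddGrp ℝ) : ℝ≥0∞ :=
  if A.1 = ⊥ then 0 else if A.1 = ⊤ then ⊤
  else ENNReal.ofReal (1 / sInf {x : ℝ | x ∈ A.1 ∧ 0 < x})

lemma psi_bot {A : ChabautyAddGrp ℝ} (h : A.1 = ⊥) : psi A = 0 := by simp [psi, h]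

lemma psi_top {A : ChabautyAddGrp ℝ} (h : A.1 = ⊤) : psi A = ⊤ := by
  have : A.1 ≠ ⊥ := by
    rw [h]; intro hb
    have h1 : (1:ℝ) ∈ (⊤ : AddSubgroup ℝ) := AddSubgroup.mem_top 1
    rw [hb] at h1
    simp [AddSubgroup.mem_bot] at h1
  simp [psi, this, h]

lemma isOpen_compl_compact {K : Set ℝ} (hK : IsCompact K) :
    IsOpen {A : ChabautyAddGrp ℝ | (A.1 : Set ℝ) ∩ K = ∅} :=
  TopologicalSpace.isOpen_generateFrom_of_mem (Or.inl ⟨K, hK, rfl⟩)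

lemma isOpen_hits_open {U : Set ℝ} (hU : IsOpen U) :
    IsOpen {A : ChabautyAddGrp ℝ | ((A.1 : Set ℝ) ∩ U).Nonempty} :=
  TopologicalSpace.isOpen_generateFrom_of_mem (Or.inr ⟨U, hU, rfl⟩)


lemma mem_zmul {c x : ℝ} : x ∈ zmultiples c ↔ ∃ n : ℤ, (n : ℝ) * c = x := by
  simp [AddSubgroup.mem_zmultiples_iff, zsmul_eq_mul]

lemma trich (A : AddSubgroup ℝ) (hA : IsClosed (A : Set ℝ)) :
    A = ⊥ ∨ A = ⊤ ∨ ∃ c : ℝ, 0 < c ∧ A = zmultiples c := by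
  rcases AddSubgroup.dense_or_cyclic A with h | ⟨a, ha⟩
  · right; left
    have : (A : Set ℝ) = Set.univ := by
      rw [← hA.closure_eq]; exact h.closure_eq
    exact SetLike.ext' this
  · rcases lt_trichotomy a 0 with h0 | h0 | h0
    · right; right
      refine ⟨-a, by linarith, ?_⟩
      rw [ha, ← AddSubgroup.zmultiples_eq_closure]
      ext x
      simp only [mem_zmul]
      constructor
      · rintro ⟨n, rfl⟩; exact ⟨-n, by push_cast; ring⟩
      · rintro ⟨n, rfl⟩; exact ⟨-n, by push_cast; ring⟩
    · left; rw [ha, h0]; simpa using AddSubgroup.closure_singleton_eq_bot_iff.mpr rfl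
    · right; right; exact ⟨a, h0, by rw [ha, AddSubgroup.zmultiples_eq_closure]⟩

lemma zmul_ne_bot {c : ℝ} (hc : 0 < c) : zmultiples c ≠ ⊥ := by
  intro h
  have : c ∈ zmultiples c := mem_zmultiples c
  rw [h, AddSubgroup.mem_bot] at this
  exact hc.ne' this

lemma zmul_ne_top {c : ℝ} (hc : 0 < c) : zmultiples c ≠ ⊤ := by
  intro h
  have : c / 2 ∈ zmultiples c := h ▸ AddSubgroup.mem_top _
  rcases mem_zmul.mp this with ⟨n, hn⟩
  have h2 : (2 * n : ℝ) = 1 := by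
    field_simp at hn
    nlinarith [hn]
  have : (2 * n : ℤ) = 1 := by exact_mod_cast h2
  omega

lemma sInf_pos_zmul {c : ℝ} (hc : 0 < c) :
    sInf {x : ℝ | x ∈ zmultiples c ∧ 0 < x} = c := by
  apply le_antisymm
  · exact csInf_le ⟨0, by rintro x ⟨hx, hx0⟩; linarith⟩ ⟨mem_zmultiples c, hc⟩
  · refine le_csInf ⟨c, mem_zmultiples c, hc⟩ ?_
    rintro x ⟨hx, hx0⟩
    rcases mem_zmul.mp hx with ⟨n, rfl⟩
    have hn : 0 < (n:ℝ) := by by_contra h; push_neg at h; nlinarith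
    have hn1 : (1:ℝ) ≤ n := by exact_mod_cast (by exact_mod_cast hn : (0:ℤ) < n)
    nlinarith


lemma mem_zmul' {c x : ℝ} : x ∈ zmultiples c ↔ ∃ n : ℤ, (n : ℝ) * c = x := by
  simp [AddSubgroup.mem_zmultiples_iff, zsmul_eq_mul]

/-- There is a multiple of `c` in `[u, u + c)`. -/
lemma exists_mult (c : ℝ) (hc : 0 < c) (u : ℝ) : ∃ n : ℤ, u ≤ n * c ∧ (n:ℝ) * c < u + c := by
  refine ⟨⌈u / c⌉, ?_, ?_⟩
  · rw [← div_le_iff₀ hc]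
    exact Int.le_ceil _
  · have := Int.ceil_lt_add_one (u / c)
    calc (⌈u/c⌉ : ℝ) * c < (u/c + 1) * c := by
          apply mul_lt_mul_of_pos_right this hc
      _ = u + c := by field_simp

/-- E1 -/
lemma zmul_inter_Ioo {c t : ℝ} (hc : 0 < c) (ht : 0 < t) :
    ((zmultiples c : Set ℝ) ∩ Ioo 0 t).Nonempty ↔ c < t := by
  constructor
  · rintro ⟨x, hx, hx1, hx2⟩
    rcases mem_zmul'.mp hx with ⟨n, rfl⟩
    have hn : 0 < (n:ℝ) := by by_contra h; push_neg at h; nlinarith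
    have hn1 : (1:ℝ) ≤ n := by exact_mod_cast (by exact_mod_cast hn : (0:ℤ) < n)
    nlinarith
  · intro h
    exact ⟨c, mem_zmultiples c, hc, h⟩

/-- E2 -/
lemma zmul_inter_Icc {c r : ℝ} (hc : 0 < c) (hr : 0 < r) :
    (zmultiples c : Set ℝ) ∩ Icc (r/2) r = ∅ ↔ r < c := by
  constructor
  · intro h
    by_contra hcr
    push_neg at hcr
    rcases le_or_gt c (r/2) with h2 | h2
    · rcases exists_mult c hc (r/2) with ⟨n, hn1, hn2⟩
      have : (n:ℝ) * c ∈ (zmultiples c : Set ℝ) ∩ Icc (r/2) r :=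
        ⟨mem_zmul'.mpr ⟨n, rfl⟩, hn1, by linarith⟩
      rw [h] at this; exact this
    · have : c ∈ (zmultiples c : Set ℝ) ∩ Icc (r/2) r :=
        ⟨mem_zmultiples c, le_of_lt h2, hcr⟩
      rw [h] at this; exact this
  · intro h
    ext x
    simp only [Set.mem_inter_iff, Set.mem_Icc, Set.mem_empty_iff_false, iff_false, not_and,
      SetLike.mem_coe]
    intro hx h1 h2
    rcases mem_zmul'.mp hx with ⟨n, rfl⟩
    rcases le_or_gt n 0 with hn | hn
    · have : (n:ℝ) * c ≤ 0 := mul_nonpos_of_nonpos_of_nonneg (by exact_mod_cast hn) hc.le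
      linarith
    · have hn1 : (1:ℝ) ≤ n := by exact_mod_cast hn
      nlinarith


lemma psi_zmul {A : ChabautyAddGrp ℝ} {c : ℝ} (hc : 0 < c) (h : A.1 = zmultiples c) :
    psi A = ENNReal.ofReal (1 / c) := by
  simp [psi, h, zmul_ne_bot hc, zmul_ne_top hc, sInf_pos_zmul hc]

lemma inv_sw1 {x y : ℝ} (hx : 0 < x) (hy : 0 < y) : x < 1/y ↔ y < 1/x := by
  rw [lt_div_iff₀ hy, lt_div_iff₀ hx, mul_comm]

lemma inv_sw2 {x y : ℝ} (hx : 0 < x) (hy : 0 < y) : 1/x < y ↔ 1/y < x := by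
  rw [div_lt_iff₀ hx, div_lt_iff₀ hy, mul_comm]

lemma psi_continuous : Continuous psi := by
  have key : @Continuous _ _ _ (TopologicalSpace.generateFrom
      {s : Set ℝ≥0∞ | ∃ a, s = Ioi a ∨ s = Iio a}) psi := by
    apply continuous_generateFrom_iff.mpr
    rintro s ⟨a, rfl | rfl⟩
    · -- Ioi a
      by_cases ha : a = ⊤
      · subst ha
        have : psi ⁻¹' Ioi ⊤ = ∅ := by ext A; simp
        rw [this]; exact isOpen_empty
      by_cases ha0 : a = 0
      · subst ha0
        have : psi ⁻¹' Ioi 0 = {A : ChabautyAddGrp ℝ | ((A.1 : Set ℝ) ∩ ({0}ᶜ)).Nonempty} := by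
          ext A
          rcases trich A.1 A.2 with h | h | ⟨c, hc, h⟩
          · simp only [mem_preimage, mem_Ioi, psi_bot h, lt_self_iff_false, false_iff, h,
              mem_setOf_eq]
            simp [AddSubgroup.coe_bot]
          · simp only [mem_preimage, mem_Ioi, psi_top h, h, mem_setOf_eq]
            simp only [ENNReal.zero_lt_top, true_iff]
            exact ⟨1, by simp [AddSubgroup.coe_top]⟩
          · simp only [mem_preimage, mem_Ioi, psi_zmul hc h, h, mem_setOf_eq]
            constructor
            · intro _
              exact ⟨c, AddSubgroup.mem_zmultiples c, by simpa using hc.ne'⟩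
            · intro _
              exact ENNReal.ofReal_pos.mpr (by positivity)
        rw [this]; exact isOpen_hits_open isOpen_compl_singleton
      · -- 0 < a < ⊤
        have hat : 0 < a.toReal := ENNReal.toReal_pos ha0 ha
        set t := 1 / a.toReal with htdef
        have ht : 0 < t := by positivity
        have : psi ⁻¹' Ioi a = {A : ChabautyAddGrp ℝ | ((A.1 : Set ℝ) ∩ Ioo 0 t).Nonempty} := by
          ext A
          rcases trich A.1 A.2 with h | h | ⟨c, hc, h⟩
          · simp only [mem_preimage, mem_Ioi, psi_bot h, h, mem_setOf_eq]
            simp only [AddSubgroup.coe_bot]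
            constructor
            · intro hlt; exact absurd hlt ENNReal.not_lt_zero
            · rintro ⟨x, hx1, hx2, hx3⟩
              simp only [mem_singleton_iff] at hx1
              subst hx1; exact absurd hx2 (lt_irrefl 0)
          · simp only [mem_preimage, mem_Ioi, psi_top h, h, mem_setOf_eq]
            constructor
            · intro _; exact ⟨t/2, by simp [AddSubgroup.coe_top], by positivity, by linarith⟩
            · intro _; exact lt_top_iff_ne_top.mpr ha
          · simp only [mem_preimage, mem_Ioi, psi_zmul hc h, h, mem_setOf_eq]
            rw [ENNReal.lt_ofReal_iff_toReal_lt ha, inv_sw1 hat hc, ← htdef,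
              ← zmul_inter_Ioo hc ht]
        rw [this]; exact isOpen_hits_open isOpen_Ioo
    · -- Iio a
      by_cases ha0 : a = 0
      · subst ha0
        have : psi ⁻¹' Iio 0 = ∅ := by ext A; simp
        rw [this]; exact isOpen_empty
      by_cases ha : a = ⊤
      · subst ha
        have : psi ⁻¹' Iio ⊤ = ⋃ x : ℝ, {A : ChabautyAddGrp ℝ | (A.1 : Set ℝ) ∩ {x} = ∅} := by
          ext A
          have hne : psi A < ⊤ ↔ A.1 ≠ ⊤ := by
            rcases trich A.1 A.2 with h | h | ⟨c, hc, h⟩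
            · rw [psi_bot h, h]
              simp only [ENNReal.zero_lt_top, true_iff]
              intro heq
              have h1 : (1:ℝ) ∈ (⊤ : AddSubgroup ℝ) := AddSubgroup.mem_top 1
              rw [← heq] at h1
              simpa [AddSubgroup.mem_bot] using h1
            · simp [psi_top h, h]
            · simp [psi_zmul hc h, h, zmul_ne_top hc]
          simp only [mem_preimage, mem_Iio, hne, mem_iUnion, mem_setOf_eq,
            Set.inter_singleton_eq_empty]
          rw [ne_eq, AddSubgroup.eq_top_iff']
          push_neg
          rfl
        rw [this]
        exact isOpen_iUnion fun x => isOpen_compl_compact isCompact_singleton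
      · have hat : 0 < a.toReal := ENNReal.toReal_pos ha0 ha
        set r := 1 / a.toReal with hrdef
        have hr : 0 < r := by positivity
        have : psi ⁻¹' Iio a = {A : ChabautyAddGrp ℝ | (A.1 : Set ℝ) ∩ Icc (r/2) r = ∅} := by
          ext A
          rcases trich A.1 A.2 with h | h | ⟨c, hc, h⟩
          · simp only [mem_preimage, mem_Iio, psi_bot h, h, mem_setOf_eq, AddSubgroup.coe_bot]
            constructor
            · intro _
              rw [Set.singleton_inter_eq_empty]
              simp only [mem_Icc, not_and]
              intro habs; linarith
            · intro _; exact pos_iff_ne_zero.mpr ha0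
          · simp only [mem_preimage, mem_Iio, psi_top h, h, mem_setOf_eq, AddSubgroup.coe_top,
              Set.univ_inter]
            constructor
            · intro habs; exact absurd habs (by simp)
            · intro habs
              have hne2 : (Icc (r/2) r).Nonempty := ⟨r, by constructor <;> linarith⟩
              rw [habs] at hne2
              exact absurd hne2 (by simp)
          · simp only [mem_preimage, mem_Iio, psi_zmul hc h, h, mem_setOf_eq]
            rw [ENNReal.ofReal_lt_iff_lt_toReal (by positivity) ha, inv_sw2 hc hat, ← hrdef,
              ← zmul_inter_Icc hc hr]
        rw [this]; exact isOpen_compl_compact isCompact_Icc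
  exact key

lemma key_nhd {α : ℝ≥0∞} (h0 : α ≠ 0) (ht : α ≠ ⊤) {η : ℝ} (hη : 0 < η)
    {P : Set ℝ≥0∞}
    (hP : ∀ β : ℝ≥0∞, β ≠ 0 → β ≠ ⊤ → |1/β.toReal - 1/α.toReal| < η → β ∈ P) :
    P ∈ nhds α := by
  have hat : 0 < α.toReal := ENNReal.toReal_pos h0 ht
  set c₀ := 1/α.toReal with hc0def
  have hc0 : 0 < c₀ := by positivity
  set δ := min η (c₀/2) with hδdef
  have hδ : 0 < δ := lt_min hη (by positivity)
  have hδη : δ ≤ η := min_le_left _ _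
  have hδc : δ < c₀ := lt_of_le_of_lt (min_le_right _ _) (by linarith)
  have ha1 : 0 < 1/(c₀+δ) := by positivity
  have hsub : Ioo (ENNReal.ofReal (1/(c₀+δ))) (ENNReal.ofReal (1/(c₀-δ))) ⊆ P := by
    rintro β ⟨hβ1, hβ2⟩
    have hβt : β ≠ ⊤ := (lt_of_lt_of_le hβ2 le_top).ne  -- may fail; fix below
    have hβ0 : β ≠ 0 := by
      intro h; rw [h] at hβ1
      exact absurd hβ1 (by simp)
    have h1 : 1/(c₀+δ) < β.toReal := (ENNReal.ofReal_lt_iff_lt_toReal ha1.le hβt).mp hβ1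
    have h2 : β.toReal < 1/(c₀-δ) := (ENNReal.lt_ofReal_iff_toReal_lt hβt).mp hβ2
    have hβtr : 0 < β.toReal := lt_trans ha1 h1
    have hA : 1/β.toReal < c₀ + δ := (inv_sw2 hβtr (by linarith)).mpr h1
    have hB : c₀ - δ < 1/β.toReal := (inv_sw1 hβtr (by linarith)).mp h2
    apply hP β hβ0 hβt
    rw [abs_sub_lt_iff]
    constructor <;> linarith
  refine Filter.mem_of_superset (isOpen_Ioo.mem_nhds ?_) hsub
  have htr : α.toReal = 1/c₀ := by rw [hc0def, one_div_one_div]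
  constructor
  · rw [ENNReal.ofReal_lt_iff_lt_toReal ha1.le ht, htr]
    exact one_div_lt_one_div_of_lt hc0 (by linarith)
  · rw [ENNReal.lt_ofReal_iff_toReal_lt ht, htr]
    exact one_div_lt_one_div_of_lt (by linarith) (by linarith)

lemma phi_cont (φ : ℝ≥0∞ → ChabautyAddGrp ℝ)
    (hφ0 : (φ 0).1 = ⊥)
    (hφtop : (φ ⊤).1 = ⊤)
    (hφ : ∀ α : ℝ≥0∞, α ≠ 0 → α ≠ ⊤ →
      (φ α).1 = AddSubgroup.zmultiples (1 / α.toReal)) :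
    Continuous φ := by
  apply continuous_generateFrom_iff.mpr
  rintro s (⟨K, hK, rfl⟩ | ⟨W, hW, rfl⟩)
  · -- avoid compact K
    rw [isOpen_iff_mem_nhds]
    intro α hα
    simp only [mem_preimage, mem_setOf_eq] at hα ⊢
    have h0K : (0:ℝ) ∉ K := by
      intro h0
      have hz : (0:ℝ) ∈ ((φ α).1 : Set ℝ) := (φ α).1.zero_mem
      exact absurd hα (Set.nonempty_iff_ne_empty.mp ⟨0, hz, h0⟩)
    obtain ⟨M, hM0, hM⟩ : ∃ M : ℝ, 0 < M ∧ ∀ k ∈ K, |k| ≤ M := by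
      rcases hK.isBounded.subset_closedBall 0 with ⟨r, hr⟩
      refine ⟨max r 1, lt_of_lt_of_le one_pos (le_max_right r 1), fun k hk => ?_⟩
      have := hr hk
      rw [Metric.mem_closedBall, Real.dist_eq, sub_zero] at this
      exact this.trans (le_max_left r 1)
    by_cases hαt : α = ⊤
    · subst hαt
      have hKe : K = ∅ := by
        rw [hφtop] at hα
        simpa [AddSubgroup.coe_top] using hα
      subst hKe
      exact Filter.univ_mem' (fun β => by simp)
    by_cases hα0 : α = 0
    · subst hα0
      refine Filter.mem_of_superset
        ((isOpen_Iio (a := ENNReal.ofReal (1/M))).mem_nhds ?_) ?_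
      · exact ENNReal.ofReal_pos.mpr (by positivity)
      · intro β hβ
        simp only [mem_Iio] at hβ
        simp only [mem_preimage, mem_setOf_eq]
        by_cases hβ0 : β = 0
        · subst hβ0
          rw [hφ0, AddSubgroup.coe_bot, Set.singleton_inter_eq_empty]
          exact h0K
        · have hβt : β ≠ ⊤ := (hβ.trans ENNReal.ofReal_lt_top).ne
          have hβr : β.toReal < 1/M := (ENNReal.lt_ofReal_iff_toReal_lt hβt).mp hβ
          have hβp : 0 < β.toReal := ENNReal.toReal_pos hβ0 hβt
          have hc : M < 1/β.toReal := (inv_sw1 hβp hM0).mp hβr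
          rw [hφ β hβ0 hβt]
          ext x
          simp only [mem_inter_iff, mem_empty_iff_false, iff_false, not_and, SetLike.mem_coe]
          intro hx hxK
          rcases mem_zmul'.mp hx with ⟨n, rfl⟩
          rcases eq_or_ne n 0 with rfl | hn
          · exact h0K (by simpa using hxK)
          · have h1n : (1:ℝ) ≤ |(n:ℝ)| := by
              rw [← Int.cast_abs]
              exact_mod_cast Int.one_le_abs hn
            have habs := hM _ hxK
            have hcpos : 0 < 1/β.toReal := by positivity
            rw [abs_mul, abs_of_pos hcpos] at habs
            nlinarith
    · -- finite positive α
      have hat : 0 < α.toReal := ENNReal.toReal_pos hα0 hαt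
      set c₀ := 1/α.toReal with hc0def
      have hc0 : 0 < c₀ := by positivity
      have hz : ((AddSubgroup.zmultiples c₀ : AddSubgroup ℝ) : Set ℝ) ∩ K = ∅ := by
        rw [← hφ α hα0 hαt]; exact hα
      by_cases hKne : K = ∅
      · subst hKne
        exact Filter.univ_mem' (fun β => Set.inter_empty _)
      have hKne' : K.Nonempty := Set.nonempty_iff_ne_empty.mpr hKne
      obtain ⟨N, hN⟩ : ∃ N : ℕ, M < (N:ℝ) * (c₀/2) := by
        rcases exists_nat_gt (M / (c₀/2)) with ⟨N, hN⟩
        refine ⟨N, ?_⟩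
        rw [div_lt_iff₀ (by positivity)] at hN
        linarith
      set F : Finset ℤ := Finset.Icc (-(N:ℤ)) N with hFdef
      have hFne : F.Nonempty := ⟨0, by simp [hFdef]⟩
      set δ := F.inf' hFne (fun n => Metric.infDist ((n:ℝ) * c₀) K) with hδdef
      have hδpos : 0 < δ := by
        rw [hδdef, Finset.lt_inf'_iff]
        intro n _
        apply (hK.isClosed.notMem_iff_infDist_pos hKne').mp
        intro hmem
        have hx : (n:ℝ)*c₀ ∈ ((AddSubgroup.zmultiples c₀ : AddSubgroup ℝ) : Set ℝ) ∩ K :=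
          ⟨mem_zmul'.mpr ⟨n, rfl⟩, hmem⟩
        rw [hz] at hx
        exact hx
      have hηpos : 0 < min (δ/(N+1)) (c₀/2) := lt_min (by positivity) (by positivity)
      apply key_nhd hα0 hαt hηpos
      intro β hβ0 hβt hβnear
      rw [← hc0def] at hβnear
      simp only [mem_preimage, mem_setOf_eq]
      rw [hφ β hβ0 hβt]
      set c := 1/β.toReal with hcdef
      have hβp : 0 < β.toReal := ENNReal.toReal_pos hβ0 hβt
      have hcpos : 0 < c := by positivity
      have hη1 : |c - c₀| < δ/(N+1) := lt_of_lt_of_le hβnear (min_le_left _ _)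
      have hη2 : |c - c₀| < c₀/2 := lt_of_lt_of_le hβnear (min_le_right _ _)
      have hchalf : c₀/2 < c := by
        rw [abs_sub_lt_iff] at hη2
        linarith [hη2.2]
      ext x
      simp only [mem_inter_iff, mem_empty_iff_false, iff_false, not_and, SetLike.mem_coe]
      intro hx hxK
      rcases mem_zmul'.mp hx with ⟨n, rfl⟩
      have habs := hM _ hxK
      rw [abs_mul, abs_of_pos hcpos] at habs
      have hnle : |(n:ℝ)| ≤ N := by
        by_contra hgt
        push_neg at hgt
        nlinarith [abs_nonneg ((n:ℝ))]
      have hnF : n ∈ F := by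
        rw [hFdef, Finset.mem_Icc]
        have h' : |n| ≤ (N:ℤ) := by exact_mod_cast (by rwa [← Int.cast_abs] at hnle : ((|n|:ℤ):ℝ) ≤ N)
        exact abs_le.mp h'
      have hinf : Metric.infDist ((n:ℝ)*c₀) K ≤ dist ((n:ℝ)*c₀) ((n:ℝ)*c) :=
        Metric.infDist_le_dist_of_mem hxK
      have hdist : dist ((n:ℝ)*c₀) ((n:ℝ)*c) = |(n:ℝ)| * |c₀ - c| := by
        rw [Real.dist_eq, ← mul_sub, abs_mul]
      have hδle : δ ≤ Metric.infDist ((n:ℝ)*c₀) K := by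
        rw [hδdef]
        exact Finset.inf'_le _ hnF
      have habs2 : |c₀ - c| = |c - c₀| := abs_sub_comm _ _
      have e1 : |(n:ℝ)| * |c₀ - c| ≤ (N:ℝ) * |c - c₀| := by
        rw [habs2]; exact mul_le_mul_of_nonneg_right hnle (abs_nonneg _)
      have e2 : (N:ℝ) * |c - c₀| < δ := by
        rw [lt_div_iff₀ (by positivity : (0:ℝ) < (N:ℝ)+1)] at hη1
        nlinarith [abs_nonneg (c - c₀)]
      rw [hdist] at hinf
      linarith
  · -- hits open W
    rw [isOpen_iff_mem_nhds]
    intro α hα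
    simp only [mem_preimage, mem_setOf_eq] at hα ⊢
    by_cases h0W : (0:ℝ) ∈ W
    · exact Filter.univ_mem' (fun β => ⟨0, (φ β).1.zero_mem, h0W⟩)
    by_cases hαt : α = ⊤
    · subst hαt
      rw [hφtop] at hα
      obtain ⟨w, -, hw⟩ := hα
      rcases Metric.isOpen_iff.mp hW w hw with ⟨ε, hε, hball⟩
      refine Filter.mem_of_superset
        ((isOpen_Ioi (a := ENNReal.ofReal (1/ε))).mem_nhds ?_) ?_
      · exact ENNReal.ofReal_lt_top
      · intro β hβ
        simp only [mem_Ioi] at hβ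
        simp only [mem_preimage, mem_setOf_eq]
        by_cases hβt : β = ⊤
        · subst hβt
          rw [hφtop]
          exact ⟨w, by simp [AddSubgroup.coe_top], hw⟩
        · have hβ0 : β ≠ 0 := by
            intro h; rw [h] at hβ
            exact absurd hβ (by simp)
          have hβr : 1/ε < β.toReal := (ENNReal.ofReal_lt_iff_lt_toReal (by positivity) hβt).mp hβ
          have hβp : 0 < β.toReal := lt_trans (by positivity) hβr
          set c := 1/β.toReal with hcdef
          have hcε : c < ε := (inv_sw2 hβp hε).mpr hβr
          have hcpos : 0 < c := by positivity
          set n := round (w / c) with hndef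
          have hnear : |(n:ℝ)*c - w| ≤ c/2 := by
            have h1 : |w/c - (n:ℝ)| ≤ 1/2 := abs_sub_round (w/c)
            have h2 : (n:ℝ)*c - w = -((w/c - n)*c) := by field_simp; ring
            rw [h2, abs_neg, abs_mul, abs_of_pos hcpos]
            nlinarith [abs_nonneg (w/c - (n:ℝ))]
          rw [hφ β hβ0 hβt, ← hcdef]
          refine ⟨(n:ℝ)*c, mem_zmul'.mpr ⟨n, rfl⟩, hball ?_⟩
          rw [Metric.mem_ball, Real.dist_eq]
          linarith [hnear]
    by_cases hα0 : α = 0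
    · exfalso
      subst hα0
      rw [hφ0] at hα
      obtain ⟨x, hx, hxW⟩ := hα
      rw [AddSubgroup.coe_bot, mem_singleton_iff] at hx
      exact h0W (hx ▸ hxW)
    · have hat : 0 < α.toReal := ENNReal.toReal_pos hα0 hαt
      set c₀ := 1/α.toReal with hc0def
      have hc0 : 0 < c₀ := by positivity
      rw [hφ α hα0 hαt, ← hc0def] at hα
      obtain ⟨x, hx, hxW⟩ := hα
      rcases mem_zmul'.mp hx with ⟨n, rfl⟩
      rcases Metric.isOpen_iff.mp hW _ hxW with ⟨ε, hε, hball⟩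
      have hηpos : 0 < ε/(|(n:ℝ)| + 1) := by positivity
      apply key_nhd hα0 hαt hηpos
      intro β hβ0 hβt hβnear
      rw [← hc0def] at hβnear
      simp only [mem_preimage, mem_setOf_eq]
      rw [hφ β hβ0 hβt]
      set c := 1/β.toReal with hcdef
      refine ⟨(n:ℝ)*c, mem_zmul'.mpr ⟨n, rfl⟩, hball ?_⟩
      rw [Metric.mem_ball, Real.dist_eq, ← mul_sub]
      rw [abs_mul]
      have h1 : |c - c₀| < ε/(|(n:ℝ)|+1) := hβnear
      rw [lt_div_iff₀ (by positivity : (0:ℝ) < |(n:ℝ)|+1)] at h1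
      have h2 : (0:ℝ) ≤ |(n:ℝ)| := abs_nonneg _
      have h3 : (0:ℝ) ≤ |c - c₀| := abs_nonneg _
      nlinarith


/-- The map from `[0, ∞]` to the Chabauty space of closed subgroups of `ℝ`, sending
`α ∈ (0, ∞)` to `(1/α)ℤ`, sending `0` to `{0}` and `∞` to `ℝ`, is a homeomorphism. -/
theorem chabauty_real_homeomorph (φ : ℝ≥0∞ → ChabautyAddGrp ℝ)
    (hφ0 : (φ 0).1 = ⊥)
    (hφtop : (φ ⊤).1 = ⊤)
    (hφ : ∀ α : ℝ≥0∞, α ≠ 0 → α ≠ ⊤ →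
      (φ α).1 = AddSubgroup.zmultiples (1 / α.toReal)) :
    IsHomeomorph φ := by
  rw [isHomeomorph_iff_exists_inverse]
  refine ⟨phi_cont φ hφ0 hφtop hφ, psi, ?_, ?_, psi_continuous⟩
  · intro α
    by_cases hαt : α = ⊤
    · subst hαt; rw [psi_top hφtop]
    by_cases hα0 : α = 0
    · subst hα0; rw [psi_bot hφ0]
    · have hat := ENNReal.toReal_pos hα0 hαt
      have hc : 0 < 1/α.toReal := by positivity
      rw [psi_zmul hc (hφ α hα0 hαt), one_div_one_div, ENNReal.ofReal_toReal hαt]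
  · intro A
    apply Subtype.ext
    rcases trich A.1 A.2 with h | h | ⟨c, hc, h⟩
    · rw [psi_bot h, hφ0, h]
    · rw [psi_top h, hφtop, h]
    · have h1c : 0 < 1/c := by positivity
      have hne0 : ENNReal.ofReal (1/c) ≠ 0 := (ENNReal.ofReal_pos.mpr h1c).ne'
      have hnet : ENNReal.ofReal (1/c) ≠ ⊤ := ENNReal.ofReal_ne_top
      rw [psi_zmul hc h, hφ _ hne0 hnet, ENNReal.toReal_ofReal h1c.le, one_div_one_div, h]
end

section
/- The set of closed subgroups of a closed subgroup G of GL(V) whose action on V is distal is a closed subset of the Chabauty space S(G). -/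
open Matrix

/-- The space of closed subgroups of a topological group `G`. -/
def ChabautyGrp (G : Type*) [Group G] [TopologicalSpace G] :=
  {H : Subgroup G // IsClosed (H : Set G)}

/-- The Chabauty topology on the space of closed subgroups. -/
instance (G : Type*) [Group G] [TopologicalSpace G] : TopologicalSpace (ChabautyGrp G) :=
  TopologicalSpace.generateFrom
    ({S | ∃ K : Set G, IsCompact K ∧ S = {A : ChabautyGrp G | (A.1 : Set G) ∩ K = ∅}} ∪
     {S | ∃ U : Set G, IsOpen U ∧ S = {A : ChabautyGrp G | ((A.1 : Set G) ∩ U).Nonempty}})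

/-- An element of `GL(V)` is distal if all its complex eigenvalues have modulus 1. -/
def IsDistalElt {n : ℕ} (g : GL (Fin n) ℝ) : Prop :=
  ∀ μ ∈ spectrum ℂ ((g : Matrix (Fin n) (Fin n) ℝ).map (Complex.ofReal)), ‖μ‖ = 1

open Polynomial in
lemma aux_charpoly_eval {n : ℕ} (M : Matrix (Fin n) (Fin n) ℂ) (μ : ℂ) :
    M.charpoly.eval μ = (μ • (1 : Matrix (Fin n) (Fin n) ℂ) - M).det := by
  rw [Matrix.charpoly, ← Polynomial.coe_evalRingHom, RingHom.map_det]
  congr 1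
  ext i j
  rcases eq_or_ne i j with h | h
  · subst h; simp [charmatrix_apply_eq]
  · simp [charmatrix_apply_ne _ _ _ h, Matrix.one_apply_ne h]

open Polynomial in
lemma aux_mem_spectrum_iff_isRoot {n : ℕ} (M : Matrix (Fin n) (Fin n) ℂ) (μ : ℂ) :
    μ ∈ spectrum ℂ M ↔ M.charpoly.IsRoot μ := by
  rw [spectrum.mem_iff, Polynomial.IsRoot, aux_charpoly_eval,
    Algebra.algebraMap_eq_smul_one]
  constructor
  · intro h
    by_contra hdet
    exact h ((Matrix.isUnit_iff_isUnit_det _).2 (isUnit_iff_ne_zero.2 hdet))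
  · intro h hu
    exact ((Matrix.isUnit_iff_isUnit_det _).1 hu).ne_zero h

open Polynomial in
lemma aux_exists_root_near (q : ℂ[X]) (hq : q.Monic) (μ : ℂ) {ε : ℝ} (hε : 0 ≤ ε)
    (h : ‖q.eval μ‖ < ε ^ q.natDegree) : ∃ ν ∈ q.roots, ‖μ - ν‖ < ε := by
  by_contra h'
  push_neg at h'
  have hsplit := IsAlgClosed.splits q
  have hcard : q.natDegree = Multiset.card q.roots := by
    exact hsplit.natDegree_eq_card_roots
  have hfac := hsplit.eq_prod_roots_of_monic hq
  have heval : q.eval μ = ((q.roots.map fun a => μ - a)).prod := by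
    conv_lhs => rw [hfac]
    rw [Polynomial.eval_multiset_prod, Multiset.map_map]
    simp
  have hnormgen : ∀ s : Multiset ℂ, ‖s.prod‖ = (s.map fun x => ‖x‖).prod := by
    intro s
    induction s using Multiset.induction with
    | empty => simp
    | cons a t ih => simp [Multiset.prod_cons, ih]
  have hnorm : ‖q.eval μ‖ = ((q.roots.map fun a => ‖μ - a‖)).prod := by
    rw [heval, hnormgen, Multiset.map_map]
    rfl
  have key : ∀ s : Multiset ℝ, (∀ x ∈ s, ε ≤ x) → ε ^ Multiset.card s ≤ s.prod := by
    intro s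
    induction s using Multiset.induction with
    | empty => simp
    | cons a t ih =>
      intro hs
      rw [Multiset.prod_cons, Multiset.card_cons, pow_succ']
      have ha : ε ≤ a := hs a (Multiset.mem_cons_self a t)
      exact mul_le_mul ha (ih fun x hx => hs x (Multiset.mem_cons_of_mem hx))
        (pow_nonneg hε _) (hε.trans ha)
  have hge : ε ^ q.natDegree ≤ ‖q.eval μ‖ := by
    rw [hnorm, hcard, ← Multiset.card_map (fun a => ‖μ - a‖) q.roots]
    refine key _ ?_
    intro x hx
    obtain ⟨a, ha, rfl⟩ := Multiset.mem_map.1 hx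
    exact h' a ha
  exact absurd h (not_lt.2 hge)

lemma aux_isOpen_nondistal {n : ℕ} :
    IsOpen {g : GL (Fin n) ℝ | ¬ IsDistalElt g} := by
  rw [isOpen_iff_forall_mem_open]
  intro g hg
  simp only [Set.mem_setOf_eq, IsDistalElt, not_forall] at hg
  obtain ⟨μ, hμspec, hμ⟩ := hg
  set Mc : GL (Fin n) ℝ → Matrix (Fin n) (Fin n) ℂ :=
    fun g' => ((g' : Matrix (Fin n) (Fin n) ℝ).map (Complex.ofReal)) with hMc
  set ε : ℝ := |‖μ‖ - 1| with hε
  have hεpos : 0 < ε := abs_pos.2 (sub_ne_zero.2 hμ)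
  refine ⟨{g' : GL (Fin n) ℝ | ‖(Mc g').charpoly.eval μ‖ < ε ^ n}, ?_, ?_, ?_⟩
  · -- contained in nondistal set
    intro g' hg'
    simp only [Set.mem_setOf_eq] at hg' ⊢
    have hn : (Mc g').charpoly.natDegree = n := by
      rw [Matrix.charpoly_natDegree_eq_dim, Fintype.card_fin]
    have := aux_exists_root_near (Mc g').charpoly ((Mc g').charpoly_monic) μ hεpos.le
      (by rwa [hn])
    obtain ⟨ν, hνroot, hνclose⟩ := this
    have hνspec : ν ∈ spectrum ℂ (Mc g') :=
      (aux_mem_spectrum_iff_isRoot _ _).2 (Polynomial.isRoot_of_mem_roots hνroot)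
    intro hdist
    have h1 : ‖ν‖ = 1 := hdist ν hνspec
    have : |‖μ‖ - 1| ≤ ‖μ - ν‖ := by
      calc |‖μ‖ - 1| = |‖μ‖ - ‖ν‖| := by rw [h1]
        _ ≤ ‖μ - ν‖ := abs_norm_sub_norm_le μ ν
    exact absurd hνclose (not_lt.2 this)
  · -- open
    have hcont : Continuous fun g' : GL (Fin n) ℝ =>
        ‖(Mc g').charpoly.eval μ‖ := by
      have : Continuous fun g' : GL (Fin n) ℝ =>
          (μ • (1 : Matrix (Fin n) (Fin n) ℂ) - Mc g').det := by
        exact ((continuous_const.sub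
          ((Units.continuous_val).matrix_map Complex.continuous_ofReal)).matrix_det)
      simp only [aux_charpoly_eval]
      exact this.norm
    exact hcont.isOpen_preimage (Set.Iio (ε ^ n)) isOpen_Iio
  · -- contains g
    simp only [Set.mem_setOf_eq]
    have : (Mc g).charpoly.eval μ = 0 := (aux_mem_spectrum_iff_isRoot _ _).1 hμspec
    rw [this, norm_zero]
    exact pow_pos hεpos n

/-- The set of closed subgroups of a closed subgroup `G` of `GL(V)` whose action on `V` is
distal is a closed subset of the Chabauty space `S(G)`. -/
theorem distal_subgroups_isClosed {n : ℕ} (G : Subgroup (GL (Fin n) ℝ))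
    (hG : IsClosed (G : Set (GL (Fin n) ℝ))) :
    IsClosed {A : ChabautyGrp ↥G | ∀ h ∈ A.1, IsDistalElt (h : GL (Fin n) ℝ)} := by
  rw [← isOpen_compl_iff]
  have hN : IsOpen {h : ↥G | ¬ IsDistalElt (h : GL (Fin n) ℝ)} :=
    aux_isOpen_nondistal.preimage continuous_subtype_val
  have hset : {A : ChabautyGrp ↥G | ∀ h ∈ A.1, IsDistalElt (h : GL (Fin n) ℝ)}ᶜ =
      {A : ChabautyGrp ↥G |
        ((A.1 : Set ↥G) ∩ {h : ↥G | ¬ IsDistalElt (h : GL (Fin n) ℝ)}).Nonempty} := by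
    ext A
    simp only [Set.mem_compl_iff, Set.mem_setOf_eq, not_forall, Set.Nonempty,
      Set.mem_inter_iff, SetLike.mem_coe]
    tauto
  rw [hset]
  exact TopologicalSpace.isOpen_generateFrom_of_mem
    (Or.inr ⟨_, hN, rfl⟩)
end

section
/- Let d = m' ⊕ n be a Lie algebra where m' acts on itself by skew-symmetric operators with respect to a positive-definite form on the ambient semisimple Lie algebra g, containing d as a subalgebra, with m' ⊆ k (the compact part of a Cartan decomposition) and n = n_I the nilpotent part satisfying [m', n] ⊆ n. Then the set of X ∈ d for which ad_g X is a nilpotent endomorphism of g is exactly n. -/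
lemma trace_eq_zero_of_commute_nilpotent' {M : Type*} [AddCommGroup M] [Module ℝ M]
    [Module.Finite ℝ M] {f g : Module.End ℝ M} (hc : Commute f g) (hg : IsNilpotent g) :
    LinearMap.trace ℝ M (f * g) = 0 := by
  obtain ⟨k, hk⟩ := hg
  have hnil : IsNilpotent (f * g) := ⟨k, by rw [hc.mul_pow, hk, mul_zero]⟩
  exact (LinearMap.isNilpotent_trace_of_isNilpotent hnil).eq_zero

lemma killing_eq_zero_of_lie_eq_zero' {L : Type*} [LieRing L] [LieAlgebra ℝ L]
    [Module.Finite ℝ L] (U z : L) (h : ⁅U, z⁆ = 0)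
    (hz : IsNilpotent (LieAlgebra.ad ℝ L z)) : killingForm ℝ L U z = 0 := by
  have hc : Commute (LieAlgebra.ad ℝ L U) (LieAlgebra.ad ℝ L z) := by
    letI := LieRing.ofAssociativeRing (A := Module.End ℝ L)
    have h2 := (LieAlgebra.ad ℝ L).map_lie U z
    rw [h] at h2
    simp only [map_zero] at h2
    have h3 : ⁅LieAlgebra.ad ℝ L U, LieAlgebra.ad ℝ L z⁆ = 0 := h2.symm
    rw [Ring.lie_def, sub_eq_zero] at h3
    exact h3
  rw [killingForm_apply_apply, ← Module.End.mul_eq_comp]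
  exact trace_eq_zero_of_commute_nilpotent' hc hz

/-- Let `g` be a real semisimple Lie algebra with Cartan involution `θ` (with
`B_θ(Y,Z) = -B(Y,θZ)` positive definite), and let `d = m' ⊕ n` be a subalgebra where
`m' ⊆ k` (the fixed points of `θ`), every element of `n` is `ad`-nilpotent, and
`[m', n] ⊆ n`. Then the set of `X ∈ d` for which `ad_g X` is a nilpotent endomorphism of `g`
is exactly `n`. -/
theorem ad_nilpotent_elements_eq_n
    {L : Type*} [LieRing L] [LieAlgebra ℝ L] [Module.Finite ℝ L]
    [LieAlgebra.IsSemisimple ℝ L]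
    (θ : L →ₗ⁅ℝ⁆ L) (hθinv : ∀ x, θ (θ x) = x)
    (hpos : ∀ Y : L, Y ≠ 0 → 0 < -(killingForm ℝ L Y (θ Y)))
    (m' n : Submodule ℝ L)
    (hm'k : ∀ U ∈ m', θ U = U)
    (hnnil : ∀ Y ∈ n, IsNilpotent (LieAlgebra.ad ℝ L Y))
    (hbracket : ∀ U ∈ m', ∀ Y ∈ n, ⁅U, Y⁆ ∈ n)
    (hdisj : m' ⊓ n = ⊥) :
    ∀ X ∈ m' ⊔ n, (IsNilpotent (LieAlgebra.ad ℝ L X) ↔ X ∈ n) := by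
  intro X hX
  refine ⟨fun hnilX => ?_, fun h => hnnil X h⟩
  obtain ⟨U, hU, Y, hY, hUY⟩ := Submodule.mem_sup.mp hX
  -- the restriction of `ad U` to `n`
  have hmap : ∀ x ∈ n, (LieAlgebra.ad ℝ L U) x ∈ n := fun x hx => by
    rw [LieAlgebra.ad_apply]; exact hbracket U hU x hx
  set f : ↥n →ₗ[ℝ] ↥n := (LieAlgebra.ad ℝ L U).restrict hmap with hf
  have hcoe : ∀ v : ↥n, ((f v : L)) = ⁅U, (v : L)⁆ := fun v => by
    simp [hf, LinearMap.restrict_apply, LieAlgebra.ad_apply]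
  -- ker f ⊓ range f = ⊥
  have hinf : LinearMap.ker f ⊓ LinearMap.range f = ⊥ := by
    rw [eq_bot_iff]
    rintro v ⟨hvk, w, hw⟩
    have hv1 : ⁅U, (v : L)⁆ = 0 := by
      have := hcoe v
      rw [hvk] at this
      simpa using this.symm
    have hv2 : ⁅U, (w : L)⁆ = (v : L) := by rw [← hcoe w, hw]
    have h4 : ⁅U, θ (v : L)⁆ = 0 := by
      have : ⁅θ U, θ (v : L)⁆ = θ ⁅U, (v : L)⁆ := (θ.map_lie U (v : L)).symm
      rw [hm'k U hU, hv1] at this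
      simpa using this
    have hzero : killingForm ℝ L (v : L) (θ (v : L)) = 0 := by
      calc killingForm ℝ L (v : L) (θ (v : L))
          = killingForm ℝ L ⁅U, (w : L)⁆ (θ (v : L)) := by
            exact congrArg (fun t => killingForm ℝ L t (θ (v : L))) hv2.symm
        _ = -(killingForm ℝ L (w : L) ⁅U, θ (v : L)⁆) :=
            LieModule.traceForm_apply_lie_apply' ℝ L L U (w : L) (θ (v : L))
        _ = 0 := by rw [h4]; simp
    have hv0 : (v : L) = 0 := by
      by_contra hne
      have := hpos (v : L) hne
      rw [hzero] at this
      simp at this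
    simpa [Submodule.mem_bot] using Subtype.ext hv0
  -- ker f ⊔ range f = ⊤
  have htop : LinearMap.ker f ⊔ LinearMap.range f = ⊤ := by
    apply Submodule.eq_top_of_finrank_eq
    have h1 := Submodule.finrank_sup_add_finrank_inf_eq (LinearMap.ker f) (LinearMap.range f)
    rw [hinf, finrank_bot, add_zero] at h1
    have h2 := LinearMap.finrank_range_add_finrank_ker f
    omega
  -- decompose Y
  have hYmem : (⟨Y, hY⟩ : ↥n) ∈ LinearMap.ker f ⊔ LinearMap.range f := by
    rw [htop]; trivial
  obtain ⟨z, hz, r, hr, hzr⟩ := Submodule.mem_sup.mp hYmem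
  obtain ⟨w, hw⟩ := hr
  have h6 : (z : L) + ((r : ↥n) : L) = Y := by
    have := congrArg Subtype.val hzr
    simpa using this
  have h7 : ((r : ↥n) : L) = ⁅U, (w : L)⁆ := by rw [← hw, hcoe]
  have hYdec : Y = (z : L) + ⁅U, (w : L)⁆ := by rw [← h6, h7]
  have hzlie : ⁅U, (z : L)⁆ = 0 := by
    have := hcoe z
    rw [LinearMap.mem_ker.mp hz] at this
    simpa using this.symm
  -- κ(U, Y) = 0
  have hUY0 : killingForm ℝ L U Y = 0 := by
    rw [hYdec, map_add]
    have h1 : killingForm ℝ L U (z : L) = 0 :=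
      killing_eq_zero_of_lie_eq_zero' U (z : L) hzlie (hnnil _ z.2)
    have h2 : killingForm ℝ L U ⁅U, (w : L)⁆ = 0 := by
      have := LieModule.traceForm_apply_lie_apply ℝ L L U U (w : L)
      rw [lie_self] at this
      simp only [map_zero, LinearMap.zero_apply] at this
      exact this.symm
    rw [h1, h2, add_zero]
  -- κ(Y, Y) = 0 and κ(X, X) = 0
  have hYY : killingForm ℝ L Y Y = 0 := by
    rw [killingForm_apply_apply, ← Module.End.mul_eq_comp]
    exact trace_eq_zero_of_commute_nilpotent' (Commute.refl _) (hnnil Y hY)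
  have hXX : killingForm ℝ L X X = 0 := by
    rw [killingForm_apply_apply, ← Module.End.mul_eq_comp]
    exact trace_eq_zero_of_commute_nilpotent' (Commute.refl _) hnilX
  -- κ(U, U) = 0
  have hUU : killingForm ℝ L U U = 0 := by
    have hcomm : killingForm ℝ L Y U = killingForm ℝ L U Y :=
      LieModule.traceForm_comm ℝ L L Y U
    have hexp : killingForm ℝ L X X = killingForm ℝ L U U + killingForm ℝ L U Y
        + (killingForm ℝ L Y U + killingForm ℝ L Y Y) := by
      rw [← hUY]
      simp only [map_add, LinearMap.add_apply]
      ring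
    rw [hXX, hUY0, hYY, hcomm, hUY0] at hexp
    linarith
  -- U = 0
  have hU0 : U = 0 := by
    by_contra hne
    have := hpos U hne
    rw [hm'k U hU, hUU] at this
    simp at this
  rw [← hUY, hU0, zero_add]
  exact hY
end
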